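/- Let z ∈ ℝ⁴ with z₁z₂z₃z₄ < 0 and suppose that 1/|z_i| < Σ_{j≠i} 1/|z_j| for every i ∈ {1,2,3,4}. Then C(z) = √( (z₁z₂−z₃z₄)(z₂z₄−z₁z₃)(z₁z₄−z₂z₃) / (−z₁z₂z₃z₄) ). -/

import Mathlib

open scoped ComplexOrder Matrix

noncomputable section

/-- Kronecker product of three vectors in `ℂ²`, indices in lexicographic order. -/
def kron3 (x y z : Fin 2 → ℂ) : Fin 8 → ℂ := fun i =>
  x ⟨i.val / 4, by have := i.isLt; omega⟩ *
  y ⟨i.val / 2 % 2, by omega⟩ *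
  z ⟨i.val % 2, by omega⟩

/-- Kronecker product of three `2×2` matrices, indices in lexicographic order. -/
def kron3M (A B C : Matrix (Fin 2) (Fin 2) ℂ) : Matrix (Fin 8) (Fin 8) ℂ :=
  Matrix.of fun i j =>
    A ⟨i.val / 4, by have := i.isLt; omega⟩ ⟨j.val / 4, by have := j.isLt; omega⟩ *
    B ⟨i.val / 2 % 2, by omega⟩ ⟨j.val / 2 % 2, by omega⟩ *
    C ⟨i.val % 2, by omega⟩ ⟨j.val % 2, by omega⟩

/-- The rank one matrix `|v⟩⟨v|`. -/
def proj (v : Fin 8 → ℂ) : Matrix (Fin 8) (Fin 8) ℂ :=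
  Matrix.of fun i j => v i * star (v j)

/-- The X-part of an `8×8` matrix: keep the diagonal and the anti-diagonal, zero elsewhere. -/
def Xpart (ρ : Matrix (Fin 8) (Fin 8) ℂ) : Matrix (Fin 8) (Fin 8) ℂ :=
  Matrix.of fun i j => if i = j ∨ i.val + j.val = 7 then ρ i j else 0

/-- A three qubit state: positive semidefinite `8×8` matrix of trace 1. -/
def IsState (ρ : Matrix (Fin 8) (Fin 8) ℂ) : Prop :=
  ρ.PosSemidef ∧ ρ.trace = 1

/-- Unit vector in `ℂ²`. -/
def unitVec (v : Fin 2 → ℂ) : Prop := ∑ j, star (v j) * v j = 1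

/-- (Full) separability of a three qubit state: finite convex combination of
pure product states. -/
def IsSep (ρ : Matrix (Fin 8) (Fin 8) ℂ) : Prop :=
  ∃ (n : ℕ) (p : Fin n → ℝ) (x y z : Fin n → Fin 2 → ℂ),
    (∀ k, 0 ≤ p k) ∧ (∑ k, p k = 1) ∧
    (∀ k, unitVec (x k)) ∧ (∀ k, unitVec (y k)) ∧ (∀ k, unitVec (z k)) ∧
    ρ = ∑ k, (p k : ℂ) • proj (kron3 (x k) (y k) (z k))

/-- The pairing `⟨ϱ, W⟩ = Tr (ϱ Wᵀ)`. -/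
def pairing (ρ W : Matrix (Fin 8) (Fin 8) ℂ) : ℂ := (ρ * Wᵀ).trace

/-- Entanglement witness: self-adjoint, not positive semidefinite, and
nonnegative pairing against all separable states. -/
def IsEW (W : Matrix (Fin 8) (Fin 8) ℂ) : Prop :=
  W.IsHermitian ∧ ¬ W.PosSemidef ∧ ∀ ρ, IsSep ρ → 0 ≤ pairing ρ W

/-- The X-shaped matrix `X(a,b,c)`. -/
def XMat (a b : Fin 4 → ℝ) (c : Fin 4 → ℂ) : Matrix (Fin 8) (Fin 8) ℂ :=
  Matrix.of fun i j =>
    if i = j then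
      (if h : i.val < 4 then ((a ⟨i.val, h⟩ : ℝ) : ℂ)
       else ((b ⟨7 - i.val, by have := i.isLt; omega⟩ : ℝ) : ℂ))
    else if h7 : i.val + j.val = 7 then
      (if h : i.val < 4 then c ⟨i.val, h⟩
       else star (c ⟨j.val, by have := i.isLt; omega⟩))
    else 0

/-- The quantity `A(s,t)`. -/
def Afun (s t : Fin 4 → ℝ) : ℝ :=
  ⨅ r : Set.Ioi (0 : ℝ),
    (Real.sqrt ((s 0 * (r : ℝ)⁻¹ + t 3 * (r : ℝ)) * (s 3 * (r : ℝ)⁻¹ + t 0 * (r : ℝ))) +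
     Real.sqrt ((s 1 * (r : ℝ)⁻¹ + t 2 * (r : ℝ)) * (s 2 * (r : ℝ)⁻¹ + t 1 * (r : ℝ))))

/-- The quantity `B(u)`. -/
def Bfun (u : Fin 4 → ℂ) : ℝ :=
  ⨆ θ : ℝ,
    (‖u 0 * Complex.exp ((θ : ℂ) * Complex.I) + star (u 3)‖ +
     ‖u 1 * Complex.exp ((θ : ℂ) * Complex.I) + star (u 2)‖)

/-- The quantity `C(z)`. -/
def Cfun (z : Fin 4 → ℂ) : ℝ :=
  ⨆ p : ℝ × ℝ × ℝ,
    |(z 0 * Complex.exp (((p.1 + p.2.1 + p.2.2 : ℝ) : ℂ) * Complex.I)).re +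
     (z 1 * Complex.exp (((p.1 : ℝ) : ℂ) * Complex.I)).re +
     (z 2 * Complex.exp (((p.2.1 : ℝ) : ℂ) * Complex.I)).re +
     (z 3 * Complex.exp (((p.2.2 : ℝ) : ℂ) * Complex.I)).re|

/-- The quantity `L(ϱ,z)`, where the X-part of `ϱ` is `X(a,b,c)`. -/
def Lfun (c z : Fin 4 → ℂ) : ℝ :=
  (z 0 * c 0 + z 1 * c 1 + z 2 * c 2 + z 3 * star (c 3)).re

/-- Partial transpose with respect to the first tensor factor. -/
def pt1 (ρ : Matrix (Fin 8) (Fin 8) ℂ) : Matrix (Fin 8) (Fin 8) ℂ :=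
  Matrix.of fun i j =>
    ρ ⟨(j.val / 4) * 4 + i.val % 4, by have := i.isLt; have := j.isLt; omega⟩
      ⟨(i.val / 4) * 4 + j.val % 4, by have := i.isLt; have := j.isLt; omega⟩

/-- Partial transpose with respect to the second tensor factor. -/
def pt2 (ρ : Matrix (Fin 8) (Fin 8) ℂ) : Matrix (Fin 8) (Fin 8) ℂ :=
  Matrix.of fun i j =>
    ρ ⟨(i.val / 4) * 4 + (j.val / 2 % 2) * 2 + i.val % 2,
        by have := i.isLt; have := j.isLt; omega⟩
      ⟨(j.val / 4) * 4 + (i.val / 2 % 2) * 2 + j.val % 2,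
        by have := i.isLt; have := j.isLt; omega⟩

/-- Partial transpose with respect to the third tensor factor. -/
def pt3 (ρ : Matrix (Fin 8) (Fin 8) ℂ) : Matrix (Fin 8) (Fin 8) ℂ :=
  Matrix.of fun i j =>
    ρ ⟨(i.val / 4) * 4 + (i.val / 2 % 2) * 2 + j.val % 2,
        by have := i.isLt; have := j.isLt; omega⟩
      ⟨(j.val / 4) * 4 + (j.val / 2 % 2) * 2 + i.val % 2,
        by have := i.isLt; have := j.isLt; omega⟩

/-- A three qubit state has positive partial transposes. -/
def IsPPT (ρ : Matrix (Fin 8) (Fin 8) ℂ) : Prop :=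
  (pt1 ρ).PosSemidef ∧ (pt2 ρ).PosSemidef ∧ (pt3 ρ).PosSemidef

/-- `λ₅` from the anti-diagonal of a GHZ diagonal state. -/
def lam5 (c : Fin 4 → ℝ) : ℝ := 2 * (c 0 + c 1 + c 2 + c 3)
/-- `λ₆`. -/
def lam6 (c : Fin 4 → ℝ) : ℝ := 2 * (-c 0 - c 1 + c 2 + c 3)
/-- `λ₇`. -/
def lam7 (c : Fin 4 → ℝ) : ℝ := 2 * (-c 0 + c 1 - c 2 + c 3)
/-- `λ₈`. -/
def lam8 (c : Fin 4 → ℝ) : ℝ := 2 * (-c 0 + c 1 + c 2 - c 3)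

/-- `t₁`. -/
def tc1 (c : Fin 4 → ℝ) : ℝ :=
  c 0 * (-(c 0)^2 + (c 1)^2 + (c 2)^2 + (c 3)^2) - 2 * c 1 * c 2 * c 3
/-- `t₂`. -/
def tc2 (c : Fin 4 → ℝ) : ℝ :=
  c 1 * ((c 0)^2 - (c 1)^2 + (c 2)^2 + (c 3)^2) - 2 * c 0 * c 2 * c 3
/-- `t₃`. -/
def tc3 (c : Fin 4 → ℝ) : ℝ :=
  c 2 * ((c 0)^2 + (c 1)^2 - (c 2)^2 + (c 3)^2) - 2 * c 0 * c 1 * c 3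
/-- `t₄`. -/
def tc4 (c : Fin 4 → ℝ) : ℝ :=
  c 3 * ((c 0)^2 + (c 1)^2 + (c 2)^2 - (c 3)^2) - 2 * c 0 * c 1 * c 2

set_option maxHeartbeats 1600000

private lemma recip_cubic (A B C D : ℝ) (hA : 0 < A) (hB : 0 < B) (hC : 0 < C) (hD : 0 < D)
    (h : A⁻¹ < B⁻¹ + C⁻¹ + D⁻¹) : B*C*D < A*C*D + A*B*D + A*B*C := by
  have h' := mul_lt_mul_of_pos_left h (show (0:ℝ) < A*B*C*D by positivity)
  have e1 : A*B*C*D*A⁻¹ = B*C*D := by field_simp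
  have e2 : A*B*C*D*(B⁻¹ + C⁻¹ + D⁻¹) = A*C*D + A*B*D + A*B*C := by field_simp
  linarith

private lemma core_sign (A B C D : ℝ) (hA : 0 < A) (hB : 0 < B) (hC : 0 < C) (hD : 0 < D)
    (h1 : B*C*D < A*C*D + A*B*D + A*B*C)
    (h2 : A*C*D < B*C*D + A*B*D + A*B*C)
    (h3 : A*B*D < B*C*D + A*C*D + A*B*C)
    (h4 : A*B*C < B*C*D + A*C*D + A*B*D) :
    0 < ((B*D*(A+C))^2 - (A*C*(B-D))^2) * (2*(A*B*C*D)*(B*D+A*C)) ∧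
    0 < ((A*C*(B+D))^2 - (B*D*(A-C))^2) * (2*(A*B*C*D)*(B*D+A*C)) := by
  have k0 : 0 < 2*(A*B*C*D)*(B*D+A*C) := by positivity
  constructor
  · have f1 : 0 < B*D*(A+C) - A*C*(B-D) := by nlinarith
    have f2 : 0 < B*D*(A+C) + A*C*(B-D) := by nlinarith
    have f3 : 0 < (B*D*(A+C))^2 - (A*C*(B-D))^2 := by nlinarith [mul_pos f1 f2]
    exact mul_pos f3 k0
  · have f1 : 0 < A*C*(B+D) - B*D*(A-C) := by nlinarith
    have f2 : 0 < A*C*(B+D) + B*D*(A-C) := by nlinarith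
    have f3 : 0 < (A*C*(B+D))^2 - (B*D*(A-C))^2 := by nlinarith [mul_pos f1 f2]
    exact mul_pos f3 k0

private lemma signs_key (a b c d : ℝ) (h : a*b*c*d < 0)
    (ha0 : a ≠ 0) (hb0 : b ≠ 0) (hc0 : c ≠ 0) (hd0 : d ≠ 0)
    (E0 : |a|⁻¹ < |b|⁻¹ + |c|⁻¹ + |d|⁻¹)
    (E1 : |b|⁻¹ < |a|⁻¹ + |c|⁻¹ + |d|⁻¹)
    (E2 : |c|⁻¹ < |a|⁻¹ + |b|⁻¹ + |d|⁻¹)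
    (E3 : |d|⁻¹ < |a|⁻¹ + |b|⁻¹ + |c|⁻¹) :
    0 < ((b*d*(a+c))^2 - (a*c*(b+d))^2) * (2*(a*b*c*d)*(b*d-a*c)) ∧
    0 < ((a*c*(b-d))^2 - (b*d*(a-c))^2) * (2*(a*b*c*d)*(b*d-a*c)) := by
  have hA : 0 < |a| := abs_pos.2 ha0
  have hB : 0 < |b| := abs_pos.2 hb0
  have hC : 0 < |c| := abs_pos.2 hc0
  have hD : 0 < |d| := abs_pos.2 hd0
  have P1 : |b| * |c| * |d| < |a| * |c| * |d| + |a| * |b| * |d| + |a| * |b| * |c| :=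
    recip_cubic |a| |b| |c| |d| hA hB hC hD E0
  have P2 : |a| * |c| * |d| < |b| * |c| * |d| + |a| * |b| * |d| + |a| * |b| * |c| := by
    have := recip_cubic |b| |a| |c| |d| hB hA hC hD (by linarith); linarith
  have P3 : |a| * |b| * |d| < |b| * |c| * |d| + |a| * |c| * |d| + |a| * |b| * |c| := by
    have := recip_cubic |c| |a| |b| |d| hC hA hB hD (by linarith); linarith
  have P4 : |a| * |b| * |c| < |b| * |c| * |d| + |a| * |c| * |d| + |a| * |b| * |d| := by
    have := recip_cubic |d| |a| |b| |c| hD hA hB hC (by linarith); linarith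
  rcases ha0.lt_or_gt with ha' | ha' <;> rcases hb0.lt_or_gt with hb' | hb' <;>
    rcases hc0.lt_or_gt with hc' | hc' <;> rcases hd0.lt_or_gt with hd' | hd'
  -- NNNN
  · exact absurd h (by nlinarith [mul_pos (mul_pos_of_neg_of_neg ha' hb') (mul_pos_of_neg_of_neg hc' hd')])
  -- NNNP
  · rw [abs_of_neg ha', abs_of_neg hb', abs_of_neg hc', abs_of_pos hd'] at P1 P2 P3 P4
    obtain ⟨k1, k2⟩ := core_sign (-a) (-b) (-c) d (by linarith) (by linarith) (by linarith)
      (by linarith) (by linarith) (by linarith) (by linarith) (by linarith)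
    exact ⟨by linarith, by linarith⟩
  -- NNPN
  · rw [abs_of_neg ha', abs_of_neg hb', abs_of_pos hc', abs_of_neg hd'] at P1 P2 P3 P4
    obtain ⟨k1, k2⟩ := core_sign (-b) (-a) (-d) c (by linarith) (by linarith) (by linarith)
      (by linarith) (by linarith) (by linarith) (by linarith) (by linarith)
    exact ⟨by linarith, by linarith⟩
  -- NNPP
  · exact absurd h (by nlinarith [mul_pos (mul_pos_of_neg_of_neg ha' hb') (mul_pos hc' hd')])
  -- NPNN
  · rw [abs_of_neg ha', abs_of_pos hb', abs_of_neg hc', abs_of_neg hd'] at P1 P2 P3 P4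
    obtain ⟨k1, k2⟩ := core_sign (-a) (-d) (-c) b (by linarith) (by linarith) (by linarith)
      (by linarith) (by linarith) (by linarith) (by linarith) (by linarith)
    exact ⟨by linarith, by linarith⟩
  -- NPNP
  · exact absurd h (by nlinarith [mul_pos (mul_pos_of_neg_of_neg ha' hc') (mul_pos hb' hd')])
  -- NPPN
  · exact absurd h (by nlinarith [mul_pos (mul_pos_of_neg_of_neg ha' hd') (mul_pos hb' hc')])
  -- NPPP
  · rw [abs_of_neg ha', abs_of_pos hb', abs_of_pos hc', abs_of_pos hd'] at P1 P2 P3 P4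
    obtain ⟨k1, k2⟩ := core_sign b c d (-a) (by linarith) (by linarith) (by linarith)
      (by linarith) (by linarith) (by linarith) (by linarith) (by linarith)
    exact ⟨by linarith, by linarith⟩
  -- PNNN
  · rw [abs_of_pos ha', abs_of_neg hb', abs_of_neg hc', abs_of_neg hd'] at P1 P2 P3 P4
    obtain ⟨k1, k2⟩ := core_sign (-b) (-c) (-d) a (by linarith) (by linarith) (by linarith)
      (by linarith) (by linarith) (by linarith) (by linarith) (by linarith)
    exact ⟨by linarith, by linarith⟩
  -- PNNP
  · exact absurd h (by nlinarith [mul_pos (mul_pos_of_neg_of_neg hb' hc') (mul_pos ha' hd')])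
  -- PNPN
  · exact absurd h (by nlinarith [mul_pos (mul_pos_of_neg_of_neg hb' hd') (mul_pos ha' hc')])
  -- PNPP
  · rw [abs_of_pos ha', abs_of_neg hb', abs_of_pos hc', abs_of_pos hd'] at P1 P2 P3 P4
    obtain ⟨k1, k2⟩ := core_sign a d c (-b) (by linarith) (by linarith) (by linarith)
      (by linarith) (by linarith) (by linarith) (by linarith) (by linarith)
    exact ⟨by linarith, by linarith⟩
  -- PPNN
  · exact absurd h (by nlinarith [mul_pos (mul_pos_of_neg_of_neg hc' hd') (mul_pos ha' hb')])
  -- PPNP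
  · rw [abs_of_pos ha', abs_of_pos hb', abs_of_neg hc', abs_of_pos hd'] at P1 P2 P3 P4
    obtain ⟨k1, k2⟩ := core_sign b a d (-c) (by linarith) (by linarith) (by linarith)
      (by linarith) (by linarith) (by linarith) (by linarith) (by linarith)
    exact ⟨by linarith, by linarith⟩
  -- PPPN
  · rw [abs_of_pos ha', abs_of_pos hb', abs_of_pos hc', abs_of_neg hd'] at P1 P2 P3 P4
    obtain ⟨k1, k2⟩ := core_sign a b c (-d) (by linarith) (by linarith) (by linarith)
      (by linarith) (by linarith) (by linarith) (by linarith) (by linarith)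
    exact ⟨by linarith, by linarith⟩
  -- PPPP
  · exact absurd h (by nlinarith [mul_pos (mul_pos ha' hb') (mul_pos hc' hd')])

private lemma cauchy_bound (X Y ct st : ℝ) (hcs : st^2 + ct^2 = 1) :
    |X*ct + Y*st| ≤ Real.sqrt (X^2+Y^2) := by
  rw [← Real.sqrt_sq_eq_abs]
  apply Real.sqrt_le_sqrt
  nlinarith [sq_nonneg (X*st - Y*ct)]

private lemma exists_angle (X Y : ℝ) (h : 0 < X^2 + Y^2) :
    ∃ θ : ℝ, Real.cos θ = X / Real.sqrt (X^2+Y^2) ∧ Real.sin θ = Y / Real.sqrt (X^2+Y^2) := by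
  set w : ℂ := ⟨X, Y⟩ with hw
  have habs : ‖w‖ = Real.sqrt (X^2+Y^2) := by
    rw [Complex.norm_def]
    congr 1
    simp [Complex.normSq_apply, hw]; ring
  have hz : w ≠ 0 := by
    intro hz
    rw [hz] at habs
    simp at habs
    nlinarith [Real.sqrt_pos.2 h, habs]
  exact ⟨Complex.arg w, by rw [Complex.cos_arg hz, habs], by rw [Complex.sin_arg, habs]⟩

private lemma attain_lin (X Y r θ : ℝ) (hr : 0 < r) (hXY : X^2 + Y^2 = r^2)
    (hc : Real.cos θ = X/r) (hs : Real.sin θ = Y/r) : X*Real.cos θ + Y*Real.sin θ = r := by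
  rw [hc, hs]
  field_simp
  linear_combination hXY

private lemma master_aux (a b c d : ℝ) (h : a*b*c*d < 0)
    (ha0 : a ≠ 0) (hb0 : b ≠ 0) (hc0 : c ≠ 0) (hd0 : d ≠ 0)
    (hE1 : 0 < ((b*d*(a+c))^2 - (a*c*(b+d))^2) * (2*(a*b*c*d)*(b*d-a*c)))
    (hE2 : 0 < ((a*c*(b-d))^2 - (b*d*(a-c))^2) * (2*(a*b*c*d)*(b*d-a*c))) :
    (⨆ q : ℝ × ℝ × ℝ, |a * Real.cos (q.1 + q.2.1 + q.2.2) + b * Real.cos q.1 +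
        c * Real.cos q.2.1 + d * Real.cos q.2.2|) =
      Real.sqrt ((a*b - c*d)*(b*d - a*c)*(a*d - b*c)/(-(a*b*c*d))) := by
  have habcd : a*b*c*d ≠ 0 := ne_of_lt h
  have hbdac : b*d - a*c ≠ 0 := by
    intro he
    nlinarith [sq_nonneg (a*c), h]
  set M : ℝ := (a*b - c*d)*(b*d - a*c)*(a*d - b*c)/(-(a*b*c*d)) with hM
  set ts : ℝ := ((a*c)^2*(b^2+d^2) - (b*d)^2*(a^2+c^2)) / (2*(a*b*c*d)*(b*d - a*c)) with hts
  clear_value M ts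
  have hD0 : (2*(a*b*c*d)*(b*d - a*c)) ≠ 0 := by
    intro he
    rcases mul_eq_zero.1 he with h' | h'
    · rcases mul_eq_zero.1 h' with h'' | h''
      · norm_num at h''
      · exact habcd h''
    · exact hbdac h'
  have hD0sq : 0 < (2*(a*b*c*d)*(b*d - a*c))^2 := pow_two_pos_of_ne_zero hD0
  -- ts in (-1, 1)
  have ht1 : ts < 1 := by
    have key : 1 - ts = (((b*d*(a+c))^2 - (a*c*(b+d))^2) * (2*(a*b*c*d)*(b*d-a*c))) /
        (2*(a*b*c*d)*(b*d - a*c))^2 := by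
      rw [hts]; field_simp; ring
    have := div_pos hE1 hD0sq
    linarith
  have ht2 : -1 < ts := by
    have key : 1 + ts = (((a*c*(b-d))^2 - (b*d*(a-c))^2) * (2*(a*b*c*d)*(b*d-a*c))) /
        (2*(a*b*c*d)*(b*d - a*c))^2 := by
      rw [hts]; field_simp; ring
    have := div_pos hE2 hD0sq
    linarith
  -- nonnegativity of P, Q on [-1,1]
  have hPnn : ∀ t : ℝ, -1 ≤ t → t ≤ 1 → 0 ≤ a^2+c^2+2*(a*c)*t := by
    intro t u1 u2
    nlinarith [mul_nonneg (by linarith : (0:ℝ) ≤ 1+t) (sq_nonneg (a+c)),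
      mul_nonneg (by linarith : (0:ℝ) ≤ 1-t) (sq_nonneg (a-c))]
  have hQnn : ∀ t : ℝ, -1 ≤ t → t ≤ 1 → 0 ≤ b^2+d^2+2*(b*d)*t := by
    intro t u1 u2
    nlinarith [mul_nonneg (by linarith : (0:ℝ) ≤ 1+t) (sq_nonneg (b+d)),
      mul_nonneg (by linarith : (0:ℝ) ≤ 1-t) (sq_nonneg (b-d))]
  -- strict positivity at ts
  have hPst : 0 < a^2+c^2+2*(a*c)*ts := by
    rcases (mul_ne_zero ha0 hc0).lt_or_gt with hac | hac
    · nlinarith [sq_nonneg (a+c), mul_pos (by linarith : (0:ℝ) < -(a*c)) (by linarith : (0:ℝ) < 1 - ts)]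
    · nlinarith [sq_nonneg (a-c), mul_pos hac (by linarith : (0:ℝ) < 1 + ts)]
  have hQst : 0 < b^2+d^2+2*(b*d)*ts := by
    rcases (mul_ne_zero hb0 hd0).lt_or_gt with hbd | hbd
    · nlinarith [sq_nonneg (b+d), mul_pos (by linarith : (0:ℝ) < -(b*d)) (by linarith : (0:ℝ) < 1 - ts)]
    · nlinarith [sq_nonneg (b-d), mul_pos hbd (by linarith : (0:ℝ) < 1 + ts)]
  -- key identities
  have hI1 : ∀ t : ℝ, (M - (a^2+c^2+2*(a*c)*t) - (b^2+d^2+2*(b*d)*t))^2 -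
      4*(a^2+c^2+2*(a*c)*t)*(b^2+d^2+2*(b*d)*t) = 4*(a*c - b*d)^2*(t - ts)^2 := by
    intro t
    rw [hM, hts]
    field_simp
    ring
  have hI2 : (a*c)*(M - (a^2+c^2+2*(a*c)*ts) - (b^2+d^2+2*(b*d)*ts)) =
      -2*(b*d)*(a^2+c^2+2*(a*c)*ts) := by
    rw [hM, hts]
    field_simp
    ring
  -- positivity of M - P(ts) - Q(ts)
  have hgst : 0 < M - (a^2+c^2+2*(a*c)*ts) - (b^2+d^2+2*(b*d)*ts) := by
    rcases (mul_ne_zero ha0 hc0).lt_or_gt with hac | hac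
    · have hbd : 0 < b*d := by nlinarith
      nlinarith [hI2, mul_pos hbd hPst, hac]
    · have hbd : b*d < 0 := by nlinarith
      nlinarith [hI2, mul_pos (by linarith : (0:ℝ) < -(b*d)) hPst, hac]
  -- nonnegativity of M - P(t) - Q(t) on [-1,1]
  have hg : ∀ t : ℝ, -1 ≤ t → t ≤ 1 →
      0 ≤ M - (a^2+c^2+2*(a*c)*t) - (b^2+d^2+2*(b*d)*t) := by
    intro t u1 u2
    by_contra hneg
    push_neg at hneg
    by_cases hpq0 : a*c + b*d = 0
    · have e : (a*c + b*d) * (t - ts) = 0 := by rw [hpq0, zero_mul]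
      nlinarith [hgst, e]
    · set t1 : ℝ := (M - (a^2+c^2) - (b^2+d^2))/(2*(a*c+b*d)) with ht1def
      have hroot : M - (a^2+c^2+2*(a*c)*t1) - (b^2+d^2+2*(b*d)*t1) = 0 := by
        rw [ht1def]; field_simp; ring
      have e1 : M - (a^2+c^2+2*(a*c)*t) - (b^2+d^2+2*(b*d)*t) = -2*((a*c+b*d)*(t - t1)) := by
        rw [ht1def]; field_simp; ring
      have e2 : M - (a^2+c^2+2*(a*c)*ts) - (b^2+d^2+2*(b*d)*ts) = -2*((a*c+b*d)*(ts - t1)) := by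
        rw [ht1def]; field_simp; ring
      have hb1 : 0 < (a*c+b*d)*(t - t1) := by linarith
      have hb2 : (a*c+b*d)*(ts - t1) < 0 := by linarith
      have hbetw : (t - t1)*(ts - t1) < 0 := by
        nlinarith [mul_pos hb1 (by linarith : (0:ℝ) < -((a*c+b*d)*(ts - t1))),
          pow_two_pos_of_ne_zero hpq0]
      have htl1 : -1 < t1 := by
        by_contra h'
        push_neg at h'
        nlinarith [mul_nonneg (by linarith : (0:ℝ) ≤ t - t1) (by linarith : (0:ℝ) ≤ ts - t1)]
      have htr1 : t1 < 1 := by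
        by_contra h'
        push_neg at h'
        nlinarith [mul_nonneg (by linarith : (0:ℝ) ≤ t1 - t) (by linarith : (0:ℝ) ≤ t1 - ts)]
      have hPt1 := hPnn t1 htl1.le htr1.le
      have hQt1 := hQnn t1 htl1.le htr1.le
      have hne : t1 ≠ ts := by
        intro he
        rw [he] at hb2
        simp at hb2
      have hid := hI1 t1
      rw [hroot] at hid
      have hacbd : a*c - b*d ≠ 0 := fun he => hbdac (by linarith)
      have hx1 : 0 < (a*c - b*d)^2 := pow_two_pos_of_ne_zero hacbd
      have hx2 : 0 < (t1 - ts)^2 := pow_two_pos_of_ne_zero (sub_ne_zero.2 hne)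
      nlinarith [mul_nonneg hPt1 hQt1, mul_pos hx1 hx2]
  -- sum of square roots bound
  have hsum : ∀ t : ℝ, -1 ≤ t → t ≤ 1 →
      Real.sqrt (a^2+c^2+2*(a*c)*t) + Real.sqrt (b^2+d^2+2*(b*d)*t) ≤ Real.sqrt M := by
    intro t u1 u2
    have hPn := hPnn t u1 u2
    have hQn := hQnn t u1 u2
    have hgt := hg t u1 u2
    have hid := hI1 t
    have h4 : 4*((a^2+c^2+2*(a*c)*t)*(b^2+d^2+2*(b*d)*t)) ≤
        (M - (a^2+c^2+2*(a*c)*t) - (b^2+d^2+2*(b*d)*t))^2 := by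
      nlinarith [hid, mul_nonneg (sq_nonneg (a*c - b*d)) (sq_nonneg (t - ts))]
    have hsq : Real.sqrt (a^2+c^2+2*(a*c)*t) * Real.sqrt (b^2+d^2+2*(b*d)*t)
        ≤ (M - (a^2+c^2+2*(a*c)*t) - (b^2+d^2+2*(b*d)*t))/2 := by
      rw [← Real.sqrt_mul hPn]
      have h5 : (a^2+c^2+2*(a*c)*t)*(b^2+d^2+2*(b*d)*t) ≤
          ((M - (a^2+c^2+2*(a*c)*t) - (b^2+d^2+2*(b*d)*t))/2)^2 := by nlinarith [h4]
      calc Real.sqrt ((a^2+c^2+2*(a*c)*t)*(b^2+d^2+2*(b*d)*t))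
          ≤ Real.sqrt (((M - (a^2+c^2+2*(a*c)*t) - (b^2+d^2+2*(b*d)*t))/2)^2) :=
            Real.sqrt_le_sqrt h5
        _ = (M - (a^2+c^2+2*(a*c)*t) - (b^2+d^2+2*(b*d)*t))/2 := Real.sqrt_sq (by linarith)
    have hsq2 : (Real.sqrt (a^2+c^2+2*(a*c)*t) + Real.sqrt (b^2+d^2+2*(b*d)*t))^2 ≤ M := by
      have e : (Real.sqrt (a^2+c^2+2*(a*c)*t) + Real.sqrt (b^2+d^2+2*(b*d)*t))^2 =
          (a^2+c^2+2*(a*c)*t) + (b^2+d^2+2*(b*d)*t) +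
          2*(Real.sqrt (a^2+c^2+2*(a*c)*t) * Real.sqrt (b^2+d^2+2*(b*d)*t)) := by
        rw [add_sq, Real.sq_sqrt hPn, Real.sq_sqrt hQn]; ring
      linarith
    calc Real.sqrt (a^2+c^2+2*(a*c)*t) + Real.sqrt (b^2+d^2+2*(b*d)*t)
        = Real.sqrt ((Real.sqrt (a^2+c^2+2*(a*c)*t) + Real.sqrt (b^2+d^2+2*(b*d)*t))^2) :=
          (Real.sqrt_sq (by positivity)).symm
      _ ≤ Real.sqrt M := Real.sqrt_le_sqrt hsq2
  -- pointwise bound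
  have hpt : ∀ q : ℝ × ℝ × ℝ, |a * Real.cos (q.1 + q.2.1 + q.2.2) + b * Real.cos q.1 +
      c * Real.cos q.2.1 + d * Real.cos q.2.2| ≤ Real.sqrt M := by
    rintro ⟨α, β, γ⟩
    dsimp only
    have hc1 : -1 ≤ Real.cos (α+γ) := Real.neg_one_le_cos _
    have hc2 : Real.cos (α+γ) ≤ 1 := Real.cos_le_one _
    have b1 := cauchy_bound (a*Real.cos (α+γ) + c) (-(a*Real.sin (α+γ)))
      (Real.cos β) (Real.sin β) (Real.sin_sq_add_cos_sq β)
    have b2 := cauchy_bound (b + d*Real.cos (α+γ)) (d*Real.sin (α+γ))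
      (Real.cos α) (Real.sin α) (Real.sin_sq_add_cos_sq α)
    have r1 : (a*Real.cos (α+γ) + c)^2 + (-(a*Real.sin (α+γ)))^2 =
        a^2+c^2+2*(a*c)*Real.cos (α+γ) := by
      linear_combination a^2 * Real.sin_sq_add_cos_sq (α+γ)
    have r2 : (b + d*Real.cos (α+γ))^2 + (d*Real.sin (α+γ))^2 =
        b^2+d^2+2*(b*d)*Real.cos (α+γ) := by
      linear_combination d^2 * Real.sin_sq_add_cos_sq (α+γ)
    rw [r1] at b1
    rw [r2] at b2
    have e1 : a*Real.cos (α+β+γ) + c*Real.cos β =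
        (a*Real.cos (α+γ) + c)*Real.cos β + (-(a*Real.sin (α+γ)))*Real.sin β := by
      rw [show α+β+γ = (α+γ)+β by ring, Real.cos_add]; ring
    have e2 : b*Real.cos α + d*Real.cos γ =
        (b + d*Real.cos (α+γ))*Real.cos α + (d*Real.sin (α+γ))*Real.sin α := by
      have ecg : Real.cos γ = Real.cos (α+γ)*Real.cos α + Real.sin (α+γ)*Real.sin α := by
        rw [← Real.cos_sub]; ring_nf
      rw [ecg]; ring
    have B1 : |a*Real.cos (α+β+γ) + c*Real.cos β| ≤
        Real.sqrt (a^2+c^2+2*(a*c)*Real.cos (α+γ)) := by rw [e1]; exact b1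
    have B2 : |b*Real.cos α + d*Real.cos γ| ≤
        Real.sqrt (b^2+d^2+2*(b*d)*Real.cos (α+γ)) := by rw [e2]; exact b2
    have habs : |a * Real.cos (α + β + γ) + b * Real.cos α + c * Real.cos β + d * Real.cos γ| ≤
        |a*Real.cos (α+β+γ) + c*Real.cos β| + |b*Real.cos α + d*Real.cos γ| := by
      have h' := abs_add_le (a*Real.cos (α+β+γ) + c*Real.cos β) (b*Real.cos α + d*Real.cos γ)
      calc |a * Real.cos (α + β + γ) + b * Real.cos α + c * Real.cos β + d * Real.cos γ|
          = |(a*Real.cos (α+β+γ) + c*Real.cos β) + (b*Real.cos α + d*Real.cos γ)| := by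
            congr 1; ring
        _ ≤ _ := h'
    have := hsum (Real.cos (α+γ)) hc1 hc2
    linarith
  -- attainment
  have hMeq : ∃ q : ℝ × ℝ × ℝ, a * Real.cos (q.1 + q.2.1 + q.2.2) + b * Real.cos q.1 +
      c * Real.cos q.2.1 + d * Real.cos q.2.2 = Real.sqrt M := by
    set s := Real.arccos ts with hs
    have hcos : Real.cos s = ts := Real.cos_arccos ht2.le ht1.le
    have hsin2 : Real.sin s ^ 2 = 1 - ts^2 := by rw [Real.sin_sq, hcos]
    have hXY : (a*ts + c)^2 + (-(a*Real.sin s))^2 = a^2+c^2+2*(a*c)*ts := by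
      linear_combination a^2 * hsin2
    have hXY' : (b + d*ts)^2 + (d*Real.sin s)^2 = b^2+d^2+2*(b*d)*ts := by
      linear_combination d^2 * hsin2
    have hP : 0 < (a*ts + c)^2 + (-(a*Real.sin s))^2 := by rw [hXY]; exact hPst
    have hQ : 0 < (b + d*ts)^2 + (d*Real.sin s)^2 := by rw [hXY']; exact hQst
    obtain ⟨β, hbc, hbs⟩ := exists_angle (a*ts + c) (-(a*Real.sin s)) hP
    obtain ⟨α, hac', has'⟩ := exists_angle (b + d*ts) (d*Real.sin s) hQ
    refine ⟨(α, β, s - α), ?_⟩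
    dsimp only
    have hsqrtP : Real.sqrt ((a*ts + c)^2 + (-(a*Real.sin s))^2) =
        Real.sqrt (a^2+c^2+2*(a*c)*ts) := by rw [hXY]
    have hsqrtQ : Real.sqrt ((b + d*ts)^2 + (d*Real.sin s)^2) =
        Real.sqrt (b^2+d^2+2*(b*d)*ts) := by rw [hXY']
    have v1 : a * Real.cos (α + β + (s - α)) + c * Real.cos β =
        Real.sqrt (a^2+c^2+2*(a*c)*ts) := by
      have e : a * Real.cos (α + β + (s - α)) + c * Real.cos β =
          (a*ts + c)*Real.cos β + (-(a*Real.sin s))*Real.sin β := by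
        rw [show α + β + (s - α) = s + β by ring, Real.cos_add, hcos]; ring
      rw [e]
      exact attain_lin (a*ts + c) (-(a*Real.sin s)) (Real.sqrt (a^2+c^2+2*(a*c)*ts)) β
        (Real.sqrt_pos.2 hPst) (by rw [Real.sq_sqrt hPst.le]; exact hXY)
        (by rw [← hsqrtP]; exact hbc) (by rw [← hsqrtP]; exact hbs)
    have v2 : b * Real.cos α + d * Real.cos (s - α) =
        Real.sqrt (b^2+d^2+2*(b*d)*ts) := by
      have e : b * Real.cos α + d * Real.cos (s - α) =
          (b + d*ts)*Real.cos α + (d*Real.sin s)*Real.sin α := by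
        rw [Real.cos_sub, hcos]; ring
      rw [e]
      exact attain_lin (b + d*ts) (d*Real.sin s) (Real.sqrt (b^2+d^2+2*(b*d)*ts)) α
        (Real.sqrt_pos.2 hQst) (by rw [Real.sq_sqrt hQst.le]; exact hXY')
        (by rw [← hsqrtQ]; exact hac') (by rw [← hsqrtQ]; exact has')
    have hid := hI1 ts
    have hgsq : (M - (a^2+c^2+2*(a*c)*ts) - (b^2+d^2+2*(b*d)*ts))^2 =
        4*((a^2+c^2+2*(a*c)*ts)*(b^2+d^2+2*(b*d)*ts)) := by
      rw [sub_self] at hid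
      norm_num at hid
      linarith [hid]
    have h2pq : 2*(Real.sqrt (a^2+c^2+2*(a*c)*ts) * Real.sqrt (b^2+d^2+2*(b*d)*ts)) =
        M - (a^2+c^2+2*(a*c)*ts) - (b^2+d^2+2*(b*d)*ts) := by
      have e3 : Real.sqrt (a^2+c^2+2*(a*c)*ts) * Real.sqrt (b^2+d^2+2*(b*d)*ts) =
          Real.sqrt ((a^2+c^2+2*(a*c)*ts)*(b^2+d^2+2*(b*d)*ts)) := (Real.sqrt_mul hPst.le _).symm
      have e4 : (a^2+c^2+2*(a*c)*ts)*(b^2+d^2+2*(b*d)*ts) =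
          ((M - (a^2+c^2+2*(a*c)*ts) - (b^2+d^2+2*(b*d)*ts))/2)^2 := by linarith [hgsq]
      rw [e3, e4, Real.sqrt_sq (by linarith [hgst])]
      ring
    have hvsum : (Real.sqrt (a^2+c^2+2*(a*c)*ts) + Real.sqrt (b^2+d^2+2*(b*d)*ts))^2 = M := by
      rw [add_sq, Real.sq_sqrt hPst.le, Real.sq_sqrt hQst.le]
      linarith [h2pq]
    have hfin : Real.sqrt M = Real.sqrt (a^2+c^2+2*(a*c)*ts) + Real.sqrt (b^2+d^2+2*(b*d)*ts) := by
      rw [← hvsum, Real.sqrt_sq (by positivity)]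
    rw [hfin]
    linarith [v1, v2]
  -- conclusion
  obtain ⟨q0, hq0⟩ := hMeq
  have hub : Real.sqrt M ∈ upperBounds (Set.range (fun q : ℝ × ℝ × ℝ =>
      |a * Real.cos (q.1 + q.2.1 + q.2.2) + b * Real.cos q.1 +
        c * Real.cos q.2.1 + d * Real.cos q.2.2|)) := by
    rintro x ⟨q, rfl⟩
    exact hpt q
  apply le_antisymm
  · exact ciSup_le hpt
  · have heq : Real.sqrt M = |a * Real.cos (q0.1 + q0.2.1 + q0.2.2) + b * Real.cos q0.1 +
        c * Real.cos q0.2.1 + d * Real.cos q0.2.2| := by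
      rw [hq0, abs_of_nonneg (Real.sqrt_nonneg M)]
    rw [heq]
    exact le_ciSup ⟨Real.sqrt M, hub⟩ q0

private lemma master_full (a b c d : ℝ) (h : a*b*c*d < 0)
    (E0 : |a|⁻¹ < |b|⁻¹ + |c|⁻¹ + |d|⁻¹)
    (E1 : |b|⁻¹ < |a|⁻¹ + |c|⁻¹ + |d|⁻¹)
    (E2 : |c|⁻¹ < |a|⁻¹ + |b|⁻¹ + |d|⁻¹)
    (E3 : |d|⁻¹ < |a|⁻¹ + |b|⁻¹ + |c|⁻¹) :
    (⨆ q : ℝ × ℝ × ℝ, |a * Real.cos (q.1 + q.2.1 + q.2.2) + b * Real.cos q.1 +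
        c * Real.cos q.2.1 + d * Real.cos q.2.2|) =
      Real.sqrt ((a*b - c*d)*(b*d - a*c)*(a*d - b*c)/(-(a*b*c*d))) := by
  have ha0 : a ≠ 0 := fun h' => by simp [h'] at h
  have hb0 : b ≠ 0 := fun h' => by simp [h'] at h
  have hc0 : c ≠ 0 := fun h' => by simp [h'] at h
  have hd0 : d ≠ 0 := fun h' => by simp [h'] at h
  obtain ⟨hE1, hE2⟩ := signs_key a b c d h ha0 hb0 hc0 hd0 E0 E1 E2 E3
  exact master_aux a b c d h ha0 hb0 hc0 hd0 hE1 hE2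

/-- if `z₁z₂z₃z₄ < 0` and `1/|zᵢ| < Σ_{j≠i} 1/|z_j|` for every `i`,
then `C(z) = √((z₁z₂−z₃z₄)(z₂z₄−z₁z₃)(z₁z₄−z₂z₃)/(−z₁z₂z₃z₄))`. -/
theorem stmt12 (z : Fin 4 → ℝ) (h : z 0 * z 1 * z 2 * z 3 < 0)
    (h0 : ∀ i : Fin 4, (|z i|)⁻¹ < ∑ j ∈ Finset.univ.erase i, (|z j|)⁻¹) :
    Cfun (fun j => (z j : ℂ)) =
      Real.sqrt ((z 0 * z 1 - z 2 * z 3) * (z 1 * z 3 - z 0 * z 2) *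
        (z 0 * z 3 - z 1 * z 2) / (-(z 0 * z 1 * z 2 * z 3))) := by
  have E0 : |z 0|⁻¹ < |z 1|⁻¹ + |z 2|⁻¹ + |z 3|⁻¹ := by
    have e := h0 0
    simp [Finset.sum_erase_eq_sub (Finset.mem_univ _), Fin.sum_univ_four] at e
    linarith
  have E1 : |z 1|⁻¹ < |z 0|⁻¹ + |z 2|⁻¹ + |z 3|⁻¹ := by
    have e := h0 1
    simp [Finset.sum_erase_eq_sub (Finset.mem_univ _), Fin.sum_univ_four] at e
    linarith
  have E2 : |z 2|⁻¹ < |z 0|⁻¹ + |z 1|⁻¹ + |z 3|⁻¹ := by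
    have e := h0 2
    simp [Finset.sum_erase_eq_sub (Finset.mem_univ _), Fin.sum_univ_four] at e
    linarith
  have E3 : |z 3|⁻¹ < |z 0|⁻¹ + |z 1|⁻¹ + |z 2|⁻¹ := by
    have e := h0 3
    simp [Finset.sum_erase_eq_sub (Finset.mem_univ _), Fin.sum_univ_four] at e
    linarith
  have key := master_full (z 0) (z 1) (z 2) (z 3) h E0 E1 E2 E3
  rw [← key]
  unfold Cfun
  congr 1
  funext q
  simp only [Complex.re_ofReal_mul, Complex.exp_ofReal_mul_I_re]


end
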